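/- Fix δ ∈ (0,1) and integers 1 ≤ N_P ≤ N_A. Let X_1, …, X_{N_A} be independent standard Gaussians and X_{(1)} ≥ … ≥ X_{(N_A)} their decreasing order statistics. Then with probability at least 1 − δ, for every i ∈ {1,…,N_P} one has X_{(i)} ≤ √( 2·log( (e·N_A/i)·(N_P/δ)^{1/i} ) ). -/

import Mathlib

open MeasureTheory ProbabilityTheory
open scoped ENNReal NNReal

/-- The `i`-th largest entry (0-indexed: `i = 0` is the largest) of the tuple `v`. -/
noncomputable def orderStatDesc {n : ℕ} (v : Fin n → ℝ) (i : Fin n) : ℝ :=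
  v (Tuple.sort v i.rev)


lemma aux_orderStat {n : ℕ} (v : Fin n → ℝ) (i : Fin n) (t : ℝ)
    (h : t < orderStatDesc v i) :
    (i : ℕ) + 1 ≤ (Finset.univ.filter (fun j => t < v j)).card := by
  classical
  have hmono := Tuple.monotone_sort v
  have himg : (Finset.Ici i.rev).image (Tuple.sort v) ⊆
      Finset.univ.filter (fun j => t < v j) := by
    intro j hj
    simp only [Finset.mem_image, Finset.mem_Ici] at hj
    obtain ⟨k, hk, rfl⟩ := hj
    simp only [Finset.mem_filter, Finset.mem_univ, true_and]
    exact lt_of_lt_of_le h (hmono hk)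
  have hcard := Finset.card_le_card himg
  rw [Finset.card_image_of_injective _ (Tuple.sort v).injective, Fin.card_Ici] at hcard
  have h1 : (i.rev : ℕ) = n - 1 - (i : ℕ) := by
    simp [Fin.rev]
    omega
  have h2 := i.isLt
  omega

lemma aux_tail (t : ℝ) (ht : 0 ≤ t) :
    gaussianReal 0 1 (Set.Ioi t) ≤ ENNReal.ofReal (Real.exp (-t ^ 2 / 2)) := by
  rw [gaussianReal_apply 0 one_ne_zero]
  have hb : ∀ x ∈ Set.Ioi t, gaussianPDF 0 1 x ≤
      ENNReal.ofReal (Real.exp (-t ^ 2 / 2)) * gaussianPDF t 1 x := by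
    intro x hx
    rw [gaussianPDF, gaussianPDF, ← ENNReal.ofReal_mul (Real.exp_nonneg _)]
    apply ENNReal.ofReal_le_ofReal
    have hx' : t < x := hx
    unfold gaussianPDFReal
    push_cast
    have he : Real.exp (-(x - 0) ^ 2 / (2 * 1)) ≤
        Real.exp (-t ^ 2 / 2) * Real.exp (-(x - t) ^ 2 / (2 * 1)) := by
      rw [← Real.exp_add, Real.exp_le_exp]
      nlinarith
    calc (Real.sqrt (2 * Real.pi * 1))⁻¹ * Real.exp (-(x - 0) ^ 2 / (2 * 1))
        ≤ (Real.sqrt (2 * Real.pi * 1))⁻¹ *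
          (Real.exp (-t ^ 2 / 2) * Real.exp (-(x - t) ^ 2 / (2 * 1))) := by
          have hs : (0:ℝ) ≤ (Real.sqrt (2 * Real.pi * 1))⁻¹ := by positivity
          exact mul_le_mul_of_nonneg_left he hs
      _ = Real.exp (-t ^ 2 / 2) * ((Real.sqrt (2 * Real.pi * 1))⁻¹ *
          Real.exp (-(x - t) ^ 2 / (2 * 1))) := by ring
  calc ∫⁻ x in Set.Ioi t, gaussianPDF 0 1 x
      ≤ ∫⁻ x in Set.Ioi t, ENNReal.ofReal (Real.exp (-t ^ 2 / 2)) * gaussianPDF t 1 x :=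
        setLIntegral_mono (measurable_const.mul (measurable_gaussianPDF t 1)) hb
    _ = ENNReal.ofReal (Real.exp (-t ^ 2 / 2)) * ∫⁻ x in Set.Ioi t, gaussianPDF t 1 x :=
        lintegral_const_mul _ (measurable_gaussianPDF t 1)
    _ = ENNReal.ofReal (Real.exp (-t ^ 2 / 2)) * gaussianReal t 1 (Set.Ioi t) := by
        rw [← gaussianReal_apply t one_ne_zero]
    _ ≤ ENNReal.ofReal (Real.exp (-t ^ 2 / 2)) * 1 := by gcongr; exact prob_le_one
    _ = _ := mul_one _

lemma aux_arith (δ : ℝ) (hδ0 : 0 < δ) (hδ1 : δ < 1) (NP NA k : ℕ)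
    (hk1 : 1 ≤ k) (hkNP : k ≤ NP) (hNPNA : NP ≤ NA) :
    (NA.choose k : ℝ) * Real.exp
      (-(Real.sqrt (2 * Real.log ((Real.exp 1 * NA / k) *
        ((NP : ℝ) / δ) ^ (1 / (k : ℝ))))) ^ 2 / 2) ^ k ≤ δ / NP := by
  have hkR : (1:ℝ) ≤ (k:ℝ) := by exact_mod_cast hk1
  have hkpos : (0:ℝ) < k := by linarith
  have hNAk : (k:ℝ) ≤ NA := by exact_mod_cast hkNP.trans hNPNA
  have hNP1 : (1:ℝ) ≤ NP := by exact_mod_cast hk1.trans hkNP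
  set A1 : ℝ := Real.exp 1 * NA / k with hA1
  set A2 : ℝ := ((NP : ℝ) / δ) ^ (1 / (k : ℝ)) with hA2
  have hA1ge : (1:ℝ) ≤ A1 := by
    rw [hA1, le_div_iff₀ hkpos, one_mul]
    have : (1:ℝ) ≤ Real.exp 1 := by linarith [Real.add_one_le_exp (1:ℝ)]
    nlinarith
  have hBpos : (0:ℝ) < (NP : ℝ) / δ := by positivity
  have hB1 : (1:ℝ) ≤ (NP : ℝ) / δ := by
    rw [le_div_iff₀ hδ0]; linarith
  have hA2ge : (1:ℝ) ≤ A2 := Real.one_le_rpow hB1 (by positivity)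
  have hApos : (0:ℝ) < A1 * A2 := by nlinarith
  have hAge : (1:ℝ) ≤ A1 * A2 := by nlinarith
  have hlog : (0:ℝ) ≤ 2 * Real.log (A1 * A2) := by
    have := Real.log_nonneg hAge
    linarith
  have hsq : Real.sqrt (2 * Real.log (A1 * A2)) ^ 2 = 2 * Real.log (A1 * A2) :=
    Real.sq_sqrt hlog
  rw [hsq]
  have hexp : Real.exp (-(2 * Real.log (A1 * A2)) / 2) = (A1 * A2)⁻¹ := by
    rw [show -(2 * Real.log (A1 * A2)) / 2 = -Real.log (A1 * A2) by ring,
      Real.exp_neg, Real.exp_log hApos]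
  rw [hexp, inv_pow, ← div_eq_mul_inv]
  have hA2k : A2 ^ k = (NP : ℝ) / δ := by
    rw [hA2, ← Real.rpow_natCast (((NP : ℝ) / δ) ^ (1 / (k : ℝ))) k,
      ← Real.rpow_mul hBpos.le, one_div, inv_mul_cancel₀ (by positivity), Real.rpow_one]
  have hchoose : (NA.choose k : ℝ) ≤ A1 ^ k := by
    have h1 : (NA.choose k : ℝ) ≤ (NA:ℝ) ^ k / k.factorial := Nat.choose_le_pow_div k NA
    have h2 : (k:ℝ) ^ k / k.factorial ≤ Real.exp 1 ^ k := by
      rw [← Real.exp_nat_mul, mul_one]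
      exact Real.pow_div_factorial_le_exp _ hkpos.le k
    have hfact : (0:ℝ) < k.factorial := by exact_mod_cast k.factorial_pos
    have hkk : (k:ℝ) ^ k ≤ Real.exp 1 ^ k * k.factorial := by
      rw [div_le_iff₀ hfact] at h2; linarith
    have hA1k : A1 ^ k = Real.exp 1 ^ k * (NA:ℝ) ^ k / (k:ℝ) ^ k := by
      rw [hA1, div_pow, mul_pow]
    rw [hA1k, le_div_iff₀ (by positivity : (0:ℝ) < (k:ℝ) ^ k)]
    have hNAk0 : (0:ℝ) ≤ (NA:ℝ) ^ k := by positivity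
    calc (NA.choose k : ℝ) * (k:ℝ)^k ≤ ((NA:ℝ) ^ k / k.factorial) * (k:ℝ)^k := by
          apply mul_le_mul_of_nonneg_right h1 (by positivity)
      _ = (NA:ℝ) ^ k * ((k:ℝ)^k / k.factorial) := by ring
      _ ≤ (NA:ℝ) ^ k * Real.exp 1 ^ k := mul_le_mul_of_nonneg_left h2 hNAk0
      _ = Real.exp 1 ^ k * (NA:ℝ) ^ k := by ring
  have hA1kpos : (0:ℝ) < A1 ^ k := by positivity
  calc (NA.choose k : ℝ) / (A1 * A2) ^ k ≤ A1 ^ k / (A1 * A2) ^ k := by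
        exact div_le_div_of_nonneg_right hchoose (by positivity)
    _ = A1 ^ k / (A1 ^ k * ((NP:ℝ)/δ)) := by rw [mul_pow, hA2k]
    _ = δ / NP := by
        rw [div_mul_eq_div_div, div_self hA1kpos.ne', one_div_div]

/-- With probability at least `1 - δ`, every one of the `N_P` largest of `N_A` i.i.d.
standard Gaussians satisfies `X_{(i)} ≤ √(2 log((e N_A/i) (N_P/δ)^{1/i}))`. -/
theorem stmt13 {Ω : Type*} [MeasureSpace Ω] [IsProbabilityMeasure (ℙ : Measure Ω)]
    (δ : ℝ) (hδ : δ ∈ Set.Ioo (0 : ℝ) 1)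
    (NP NA : ℕ) (hNP : 1 ≤ NP) (hle : NP ≤ NA)
    (X : Fin NA → Ω → ℝ) (hmeas : ∀ i, Measurable (X i))
    (hindep : iIndepFun X ℙ)
    (hdist : ∀ i, Measure.map (X i) ℙ = gaussianReal 0 1) :
    ENNReal.ofReal (1 - δ) ≤
      ℙ {ω | ∀ i : Fin NA, (i : ℕ) < NP →
        orderStatDesc (fun k => X k ω) i ≤
          Real.sqrt (2 * Real.log ((Real.exp 1 * NA / ((i : ℕ) + 1)) *
            ((NP : ℝ) / δ) ^ (1 / ((i : ℕ) + 1 : ℝ))))} := by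
  classical
  obtain ⟨hδ0, hδ1⟩ := hδ
  set T : ℕ → ℝ := fun k => Real.sqrt (2 * Real.log ((Real.exp 1 * NA / k) *
    ((NP : ℝ) / δ) ^ (1 / (k : ℝ)))) with hT
  set Bad : ℕ → Set Ω :=
    fun k => {ω | k ≤ (Finset.univ.filter (fun j => T k < X j ω)).card} with hBad
  set B : Set Ω := ⋃ k ∈ Finset.Icc 1 NP, Bad k with hB
  -- inclusion of the complement
  have hincl : Bᶜ ⊆ {ω | ∀ i : Fin NA, (i : ℕ) < NP →
      orderStatDesc (fun k => X k ω) i ≤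
        Real.sqrt (2 * Real.log ((Real.exp 1 * NA / ((i : ℕ) + 1)) *
          ((NP : ℝ) / δ) ^ (1 / ((i : ℕ) + 1 : ℝ))))} := by
    intro ω hω
    simp only [Set.mem_setOf_eq]
    intro i hi
    have hTe : T ((i : ℕ) + 1) =
        Real.sqrt (2 * Real.log ((Real.exp 1 * NA / ((i : ℕ) + 1)) *
          ((NP : ℝ) / δ) ^ (1 / ((i : ℕ) + 1 : ℝ)))) := by
      simp only [hT]
      push_cast
      ring_nf
    by_contra hgt
    push_neg at hgt
    rw [← hTe] at hgt
    have h1 : (i : ℕ) + 1 ≤ (Finset.univ.filter (fun j => T ((i : ℕ) + 1) < X j ω)).card :=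
      aux_orderStat (fun k => X k ω) i _ hgt
    apply hω
    rw [hB]
    have hmem : (i : ℕ) + 1 ∈ Finset.Icc 1 NP := Finset.mem_Icc.mpr ⟨by omega, by omega⟩
    exact Set.mem_biUnion hmem h1
  -- probability of each bad event
  have hbad : ∀ k ∈ Finset.Icc 1 NP, ℙ (Bad k) ≤ ENNReal.ofReal (δ / NP) := by
    intro k hk
    obtain ⟨hk1, hk2⟩ := Finset.mem_Icc.mp hk
    have hsub : Bad k ⊆ ⋃ S ∈ Finset.powersetCard k (Finset.univ : Finset (Fin NA)),
        ⋂ j ∈ S, X j ⁻¹' Set.Ioi (T k) := by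
      intro ω hω
      obtain ⟨S, hS, hcard⟩ := Finset.exists_subset_card_eq (hω : k ≤ _)
      refine Set.mem_biUnion (Finset.mem_powersetCard.mpr ⟨Finset.subset_univ _, hcard⟩) ?_
      simp only [Set.mem_iInter]
      intro j hj
      have := hS hj
      simp only [Finset.mem_filter, Finset.mem_univ, true_and] at this
      exact this
    calc ℙ (Bad k) ≤ ℙ (⋃ S ∈ Finset.powersetCard k (Finset.univ : Finset (Fin NA)),
          ⋂ j ∈ S, X j ⁻¹' Set.Ioi (T k)) := measure_mono hsub
      _ ≤ ∑ S ∈ Finset.powersetCard k (Finset.univ : Finset (Fin NA)),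
          ℙ (⋂ j ∈ S, X j ⁻¹' Set.Ioi (T k)) := measure_biUnion_finset_le _ _
      _ ≤ ∑ S ∈ Finset.powersetCard k (Finset.univ : Finset (Fin NA)),
          ENNReal.ofReal (Real.exp (-(T k) ^ 2 / 2)) ^ k := by
          refine Finset.sum_le_sum fun S hS => ?_
          rw [hindep.meas_biInter (fun j _ => ⟨Set.Ioi (T k), measurableSet_Ioi, rfl⟩)]
          have hcard := (Finset.mem_powersetCard.mp hS).2
          have hterm : ∀ j ∈ S, ℙ (X j ⁻¹' Set.Ioi (T k)) ≤
              ENNReal.ofReal (Real.exp (-(T k) ^ 2 / 2)) := by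
            intro j _
            have hmap : ℙ (X j ⁻¹' Set.Ioi (T k)) = gaussianReal 0 1 (Set.Ioi (T k)) := by
              rw [← hdist j, Measure.map_apply (hmeas j) measurableSet_Ioi]
            rw [hmap]
            exact aux_tail _ (Real.sqrt_nonneg _)
          calc ∏ j ∈ S, ℙ (X j ⁻¹' Set.Ioi (T k))
              ≤ ∏ j ∈ S, ENNReal.ofReal (Real.exp (-(T k) ^ 2 / 2)) :=
                Finset.prod_le_prod' hterm
            _ = ENNReal.ofReal (Real.exp (-(T k) ^ 2 / 2)) ^ k := by
                rw [Finset.prod_const, hcard]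
      _ = (NA.choose k : ℝ≥0∞) * ENNReal.ofReal (Real.exp (-(T k) ^ 2 / 2)) ^ k := by
          rw [Finset.sum_const, Finset.card_powersetCard, Finset.card_univ, Fintype.card_fin,
            nsmul_eq_mul]
      _ ≤ ENNReal.ofReal (δ / NP) := by
          rw [← ENNReal.ofReal_pow (Real.exp_nonneg _), ← ENNReal.ofReal_natCast,
            ← ENNReal.ofReal_mul (by positivity)]
          exact ENNReal.ofReal_le_ofReal (aux_arith δ hδ0 hδ1 NP NA k hk1 hk2 hle)
  -- union bound
  have hBle : ℙ B ≤ ENNReal.ofReal δ := by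
    calc ℙ B ≤ ∑ k ∈ Finset.Icc 1 NP, ℙ (Bad k) := measure_biUnion_finset_le _ _
      _ ≤ ∑ _k ∈ Finset.Icc 1 NP, ENNReal.ofReal (δ / NP) := Finset.sum_le_sum hbad
      _ = (NP : ℝ≥0∞) * ENNReal.ofReal (δ / NP) := by
          rw [Finset.sum_const, Nat.card_Icc, nsmul_eq_mul]
          norm_num
      _ = ENNReal.ofReal δ := by
          rw [← ENNReal.ofReal_natCast, ← ENNReal.ofReal_mul (by positivity)]
          congr 1
          have : (NP : ℝ) ≠ 0 := by positivity
          field_simp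
  -- conclude
  have h1 : (1 : ℝ≥0∞) ≤ ℙ Bᶜ + ℙ B := by
    have h := measure_union_le (μ := ℙ) Bᶜ B
    rwa [Set.compl_union_self, measure_univ] at h
  have h2 : ENNReal.ofReal (1 - δ) ≤ ℙ Bᶜ := by
    have heq : ENNReal.ofReal (1 - δ) = 1 - ENNReal.ofReal δ := by
      rw [ENNReal.ofReal_sub _ hδ0.le, ENNReal.ofReal_one]
    rw [heq]
    exact tsub_le_iff_right.mpr (h1.trans (add_le_add_right hBle _))
  exact h2.trans (measure_mono hincl)
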